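/- An operator F ∈ B(A) has closed image if and only if there exist orthogonal projections P, Q ∈ B(A) such that (I-Q)F(I-P) = F and F is invertible up to (P,Q); in this case necessarily P is the orthogonal projection onto ker F and Q is the orthogonal projection onto (Im F)^⊥. -/

import Mathlib

variable {A : Type*}

/-- An orthogonal projection in a C*-algebra. -/
def IsProjectionElem [CStarAlgebra A] (p : A) : Prop := IsSelfAdjoint p ∧ p * p = p

/-- Murray–von Neumann equivalence of projections: `p ∼ q`. -/
def MvNEquiv [CStarAlgebra A] (p q : A) : Prop := ∃ v : A, v * star v = p ∧ star v * v = q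

/-- Murray–von Neumann subequivalence `p ⪯ q`: `p` is equivalent to a
subprojection of `q`. -/
def MvNSubEquiv [CStarAlgebra A] (p q : A) : Prop :=
  ∃ p' : A, IsProjectionElem p' ∧ p' * q = p' ∧ q * p' = p' ∧ MvNEquiv p p'

/-- `a` is invertible up to the pair of projections `(p, q)`. -/
def InvertibleUpTo [CStarAlgebra A] (a p q : A) : Prop :=
  ∃ b : A, (1 - q) * a * (1 - p) * b = 1 - q ∧ b * ((1 - q) * a * (1 - p)) = 1 - p

/-- An ideal of finite type elements in a unital C*-algebra `A`
(Kečkić–Lazović): a selfadjoint (two-sided, complex-linear) ideal possessing an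
approximate unit of projections, and such that for any two projections `p, q`
in the ideal there is `v` with `v v* = q` and `v* v ⊥ p`. -/
structure FiniteTypeIdeal (A : Type*) [CStarAlgebra A] where
  carrier : Set A
  zero_mem : (0 : A) ∈ carrier
  add_mem : ∀ {a b : A}, a ∈ carrier → b ∈ carrier → a + b ∈ carrier
  smul_mem : ∀ (c : ℂ) {a : A}, a ∈ carrier → c • a ∈ carrier
  mul_mem_left : ∀ (a : A) {b : A}, b ∈ carrier → a * b ∈ carrier
  mul_mem_right : ∀ (a : A) {b : A}, b ∈ carrier → b * a ∈ carrier
  star_mem : ∀ {a : A}, a ∈ carrier → star a ∈ carrier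
  approx_unit : ∀ {a : A}, a ∈ carrier → ∀ ε : ℝ, 0 < ε →
    ∃ p ∈ carrier, IsProjectionElem p ∧ ‖a * p - a‖ < ε ∧ ‖p * a - a‖ < ε
  exchange : ∀ {p q : A}, p ∈ carrier → q ∈ carrier →
    IsProjectionElem p → IsProjectionElem q →
    ∃ v : A, v * star v = q ∧ IsProjectionElem (star v * v + p)

variable [CStarAlgebra A]

/-- The orthogonal complement of a subset of `A`, viewed as a Hilbert
`A`-module over itself with inner product `⟪x, y⟫ = x* y`. -/
def OrthoComplement (S : Set A) : Set A := {x : A | ∀ n ∈ S, star n * x = 0}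

/-- A subset (submodule) of `A` is orthogonally complementable if every element
of `A` decomposes as a sum of an element of `S` and an element of `S^⊥`. -/
def IsOrthoComplementable (S : Set A) : Prop :=
  ∀ x : A, ∃ n ∈ S, ∃ m ∈ OrthoComplement S, x = n + m

/-- A closed submodule `N` of `A` is (topologically) complementable if there is
a closed submodule `L` with `N ⊓ L = 0` and `N + L = A`. -/
def IsComplementable (N : Submodule Aᵐᵒᵖ A) : Prop :=
  ∃ L : Submodule Aᵐᵒᵖ A, IsClosed (L : Set A) ∧ N ⊓ L = ⊥ ∧ N ⊔ L = ⊤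

/-- An orthogonal projection in `B(A)`: an idempotent which is self-adjoint
with respect to the `A`-valued inner product. -/
def IsOrthogonalProjectionOp (P : A →L[Aᵐᵒᵖ] A) : Prop :=
  P * P = P ∧ ∀ x y : A, star (P x) * y = star x * P y

/-- Invertibility of `F ∈ B(A)` up to a pair of projections `(P, Q)`. -/
def OpInvertibleUpTo (F P Q : A →L[Aᵐᵒᵖ] A) : Prop :=
  ∃ D : A →L[Aᵐᵒᵖ] A,
    (1 - Q) * F * (1 - P) * D = 1 - Q ∧ D * ((1 - Q) * F * (1 - P)) = 1 - P



/-- Left multiplication as a continuous `Aᵐᵒᵖ`-linear operator. -/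
noncomputable def Lmul (a : A) : A →L[Aᵐᵒᵖ] A :=
  { toFun := fun x => a * x
    map_add' := fun x y => mul_add a x y
    map_smul' := fun m x => by
      simp only [MulOpposite.smul_eq_mul_unop, RingHom.id_apply, mul_assoc]
    cont := continuous_mul_left a }

@[simp] lemma Lmul_apply (a x : A) : Lmul a x = a * x := rfl

lemma F_eq_mul (F : A →L[Aᵐᵒᵖ] A) (x : A) : F x = F 1 * x := by
  conv_lhs => rw [show x = (MulOpposite.op x) • (1 : A) by
    rw [op_smul_eq_mul, one_mul]]
  rw [F.map_smul, op_smul_eq_mul]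

/-- The `ℂ`-linear version of an `Aᵐᵒᵖ`-linear operator. -/
noncomputable def clinear (F : A →L[Aᵐᵒᵖ] A) : A →L[ℂ] A :=
  { toFun := fun x => F x
    map_add' := fun x y => F.map_add x y
    map_smul' := fun c x => by
      have h1 : ∀ y : A, (MulOpposite.op (c • (1 : A))) • y = c • y := fun y => by
        rw [op_smul_eq_mul, mul_smul_comm, mul_one]
      simp only [RingHom.id_apply]
      rw [← h1 x, F.map_smul, h1]
    cont := F.cont }

lemma bound_of_closed (F : A →L[Aᵐᵒᵖ] A) (hF : IsClosed (Set.range ⇑F)) :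
    ∃ C > (0:ℝ), ∀ y ∈ Set.range ⇑F, ∃ x : A, F 1 * x = y ∧ ‖x‖ ≤ C * ‖y‖ := by
  set N : Submodule ℂ A := LinearMap.range (clinear F).toLinearMap with hN
  have hNset : (N : Set A) = Set.range ⇑F := by
    rw [hN, LinearMap.coe_range]
    rfl
  have hNclosed : IsClosed (N : Set A) := hNset ▸ hF
  haveI : CompleteSpace N := hNclosed.completeSpace_coe
  set G' : A →L[ℂ] N := (clinear F).codRestrict N
    (fun x => LinearMap.mem_range_self _ x) with hG'
  have hsurj : Function.Surjective G' := by
    rintro ⟨y, hy⟩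
    obtain ⟨x, hx⟩ := LinearMap.mem_range.mp hy
    exact ⟨x, Subtype.ext hx⟩
  obtain ⟨C, hCpos, hC⟩ := ContinuousLinearMap.exists_preimage_norm_le G' hsurj
  refine ⟨C, hCpos, fun y hy => ?_⟩
  have hyN : y ∈ N := by rw [← SetLike.mem_coe, hNset]; exact hy
  obtain ⟨x, hx1, hx2⟩ := hC ⟨y, hyN⟩
  refine ⟨x, ?_, hx2⟩
  have := congrArg Subtype.val hx1
  rw [← F_eq_mul]
  exact this


lemma gap_of_bound (f : A) (C : ℝ) (hCpos : 0 < C)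
    (hC : ∀ y ∈ Set.range (fun x => f * x), ∃ x : A, f * x = y ∧ ‖x‖ ≤ C * ‖y‖) :
    ∀ lam ∈ spectrum ℝ (star f * f), lam = 0 ∨ 2 / (3 * C ^ 2) ≤ lam := by
  intro lam hlam
  by_contra hcon
  push_neg at hcon
  obtain ⟨hne, hlt⟩ := hcon
  have hT : IsSelfAdjoint (star f * f) := IsSelfAdjoint.star_mul_self f
  have hlampos : 0 < lam :=
    lt_of_le_of_ne (spectrum_star_mul_self_nonneg lam hlam) (Ne.symm hne)
  set φ : ℝ → ℝ := fun t => max 0 (1 - |t - lam| * (2 / lam)) with hφ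
  set ψ : ℝ → ℝ := fun t => (max t (lam / 2))⁻¹ with hψ
  have hφcont : Continuous φ := by fun_prop
  have hψcont : Continuous ψ := by
    refine (continuous_id.max continuous_const).inv₀ fun t => ne_of_gt ?_
    exact lt_of_lt_of_le (by positivity) (le_max_right t (lam / 2))
  have hφ_nonneg : ∀ t, 0 ≤ φ t := fun t => le_max_left _ _
  have hφ_le_one : ∀ t, φ t ≤ 1 := fun t => by
    have : 0 ≤ |t - lam| * (2 / lam) := by positivity
    exact max_le (by norm_num) (by linarith)
  have hφ_zero_lo : ∀ t, t ≤ lam / 2 → φ t = 0 := fun t ht => by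
    have h1 : lam / 2 ≤ |t - lam| := by
      rw [abs_sub_comm]
      exact le_trans (by linarith) (le_abs_self (lam - t))
    have h2 : 1 ≤ |t - lam| * (2 / lam) := by
      have := mul_le_mul_of_nonneg_right h1 (le_of_lt (by positivity : (0:ℝ) < 2 / lam))
      calc (1:ℝ) = lam / 2 * (2 / lam) := by field_simp
        _ ≤ |t - lam| * (2 / lam) := this
    exact max_eq_left (by linarith)
  have hφ_zero_hi : ∀ t, 3 * lam / 2 ≤ t → φ t = 0 := fun t ht => by
    have h1 : lam / 2 ≤ |t - lam| := le_trans (by linarith) (le_abs_self (t - lam))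
    have h2 : 1 ≤ |t - lam| * (2 / lam) := by
      have := mul_le_mul_of_nonneg_right h1 (le_of_lt (by positivity : (0:ℝ) < 2 / lam))
      calc (1:ℝ) = lam / 2 * (2 / lam) := by field_simp
        _ ≤ |t - lam| * (2 / lam) := this
    exact max_eq_left (by linarith)
  set a := cfc φ (star f * f) with ha
  have hasa : IsSelfAdjoint a := cfc_predicate φ (star f * f)
  -- lower bound on ‖a‖
  have h_a_lb : 1 ≤ ‖a‖ := by
    have h1 := norm_apply_le_norm_cfc φ (star f * f) hlam hφcont.continuousOn hT
    have h2 : φ lam = 1 := by simp [hφ]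
    rwa [h2, norm_one] at h1
  -- ‖f * a‖ ^ 2 ≤ 3 lam / 2
  have hmul1 : cfc (fun t => φ t * t) (star f * f) = a * (star f * f) := by
    rw [cfc_mul φ (fun t => t) (star f * f) hφcont.continuousOn continuous_id.continuousOn,
      cfc_id' ℝ (star f * f)]
  have hmul2 : cfc (fun t => φ t * t * φ t) (star f * f) = a * (star f * f) * a := by
    rw [cfc_mul (fun t => φ t * t) φ (star f * f)
      (hφcont.mul continuous_id).continuousOn hφcont.continuousOn, hmul1]
  have hbound1 : ‖a * (star f * f) * a‖ ≤ 3 * lam / 2 := by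
    rw [← hmul2]
    refine norm_cfc_le (by positivity) fun t _ => ?_
    rcases le_or_gt t (lam / 2) with h | h
    · rw [hφ_zero_lo t h]
      simp only [zero_mul, mul_zero, norm_zero]
      positivity
    rcases le_or_gt (3 * lam / 2) t with h' | h'
    · rw [hφ_zero_hi t h']
      simp only [zero_mul, mul_zero, norm_zero]
      positivity
    · rw [Real.norm_eq_abs,
        abs_of_nonneg (mul_nonneg (mul_nonneg (hφ_nonneg t) (by linarith)) (hφ_nonneg t))]
      have ht0 : (0:ℝ) ≤ t := by linarith
      calc φ t * t * φ t ≤ 1 * t * 1 := by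
            refine mul_le_mul (mul_le_mul (hφ_le_one t) le_rfl ht0 zero_le_one)
              (hφ_le_one t) (hφ_nonneg t) ?_
            positivity
        _ = t := by ring
        _ ≤ 3 * lam / 2 := by linarith
  have hfa_sq : ‖f * a‖ * ‖f * a‖ ≤ 3 * lam / 2 := by
    have hst : star (f * a) * (f * a) = a * (star f * f) * a := by
      rw [star_mul, hasa.star_eq]
      simp only [mul_assoc]
    rw [← CStarRing.norm_star_mul_self, hst]
    exact hbound1
  -- get preimage with controlled norm
  obtain ⟨x, hx1, hx2⟩ := hC (f * a) ⟨a, rfl⟩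
  have hTx : star f * f * x = star f * f * a := by
    simp only [mul_assoc, hx1]
  -- recover a from x
  have hpsi_id : ∀ t, ψ t * t * φ t = φ t := fun t => by
    rcases le_or_gt t (lam / 2) with h | h
    · rw [hφ_zero_lo t h]; ring
    · have hmax : max t (lam / 2) = t := max_eq_left h.le
      simp only [hψ]
      rw [hmax, inv_mul_cancel₀ (ne_of_gt (by linarith : (0:ℝ) < t))]
      ring
  have hmul3 : cfc (fun t => ψ t * t) (star f * f) = cfc ψ (star f * f) * (star f * f) := by
    rw [cfc_mul ψ (fun t => t) (star f * f) hψcont.continuousOn continuous_id.continuousOn,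
      cfc_id' ℝ (star f * f)]
  have ha_eq : cfc (fun t => ψ t * t) (star f * f) * x = a := by
    have e1 : cfc (fun t => ψ t * t) (star f * f) * x
        = cfc ψ (star f * f) * (star f * f * x) := by
      rw [hmul3, mul_assoc]
    have e2 : cfc ψ (star f * f) * (star f * f * a)
        = cfc (fun t => ψ t * t) (star f * f) * a := by
      rw [hmul3, mul_assoc (cfc ψ (star f * f)) (star f * f) a]
    rw [e1, hTx, e2, ha, ← cfc_mul (fun t => ψ t * t) φ (star f * f)
      (hψcont.mul continuous_id).continuousOn hφcont.continuousOn]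
    exact cfc_congr fun t _ => hpsi_id t
  have hpsi_norm : ‖cfc (fun t => ψ t * t) (star f * f)‖ ≤ 1 := by
    refine norm_cfc_le zero_le_one fun t ht => ?_
    have htnn : 0 ≤ t := spectrum_star_mul_self_nonneg t ht
    show ‖ψ t * t‖ ≤ 1
    rcases le_or_gt (lam / 2) t with h | h
    · have hmax : max t (lam / 2) = t := max_eq_left h
      have htpos : (0:ℝ) < t := by linarith
      simp only [hψ]
      rw [hmax, inv_mul_cancel₀ (ne_of_gt htpos), norm_one]
    · have hmax : max t (lam / 2) = lam / 2 := max_eq_right h.le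
      simp only [hψ]
      rw [hmax, Real.norm_eq_abs,
        abs_of_nonneg (mul_nonneg (by positivity) htnn),
        inv_mul_le_iff₀ (by positivity)]
      linarith
  -- combine
  have h_a_ub : ‖a‖ ≤ C * ‖f * a‖ := by
    calc ‖a‖ = ‖cfc (fun t => ψ t * t) (star f * f) * x‖ := by rw [ha_eq]
      _ ≤ ‖cfc (fun t => ψ t * t) (star f * f)‖ * ‖x‖ := norm_mul_le _ _
      _ ≤ 1 * (C * ‖f * a‖) := by
          exact mul_le_mul hpsi_norm hx2 (norm_nonneg x) zero_le_one
      _ = C * ‖f * a‖ := one_mul _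
  have h1 : 1 ≤ C * ‖f * a‖ := le_trans h_a_lb h_a_ub
  have h3C : (0:ℝ) < 3 * C ^ 2 := by positivity
  have hlt' : lam * (3 * C ^ 2) < 2 := (lt_div_iff₀ h3C).mp hlt
  have hn : (0:ℝ) ≤ ‖f * a‖ := norm_nonneg _
  have h4 : 1 ≤ (C * ‖f * a‖) * (C * ‖f * a‖) := by nlinarith
  have h6 : C ^ 2 * (‖f * a‖ * ‖f * a‖) ≤ C ^ 2 * (3 * lam / 2) := by
    nlinarith [sq_nonneg C]
  nlinarith


lemma exists_g_of_gap (f : A) (δ : ℝ) (hδ : 0 < δ)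
    (hgap : ∀ t ∈ spectrum ℝ (star f * f), t = 0 ∨ δ ≤ t) :
    ∃ g : A, IsSelfAdjoint (f * g) ∧ IsSelfAdjoint (g * f) ∧
      (f * g) * f = f := by
  have hT : IsSelfAdjoint (star f * f) := IsSelfAdjoint.star_mul_self f
  set h : ℝ → ℝ := fun t => min 1 (max 0 (2 * t / δ - 1)) * (max t δ)⁻¹ with hh
  have hcont : Continuous h := by
    refine Continuous.mul (by fun_prop) ?_
    exact (continuous_id.max continuous_const).inv₀ fun t =>
      ne_of_gt (lt_of_lt_of_le hδ (le_max_right t δ))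
  have hh0 : h 0 = 0 := by
    simp only [hh]
    norm_num
  have hh1 : ∀ t, δ ≤ t → h t * t = 1 := fun t ht => by
    have htpos : 0 < t := lt_of_lt_of_le hδ ht
    have h1 : max (0:ℝ) (2 * t / δ - 1) = 2 * t / δ - 1 := by
      rw [max_eq_right]
      have : (1:ℝ) ≤ 2 * t / δ := by
        rw [le_div_iff₀ hδ]; linarith
      linarith
    have h2 : min (1:ℝ) (2 * t / δ - 1) = 1 := by
      rw [min_eq_left]
      have : (2:ℝ) ≤ 2 * t / δ := by
        rw [le_div_iff₀ hδ]; linarith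
      linarith
    have h3 : max t δ = t := max_eq_left ht
    simp only [hh, h1, h2, h3]
    rw [one_mul, inv_mul_cancel₀ (ne_of_gt htpos)]
  set k := cfc h (star f * f) with hk
  have hksa : IsSelfAdjoint k := cfc_predicate h (star f * f)
  set e := cfc (fun t => h t * t) (star f * f) with he
  have hesa : IsSelfAdjoint e := cfc_predicate _ (star f * f)
  have hkT : k * (star f * f) = e := by
    rw [he, cfc_mul h (fun t => t) (star f * f) hcont.continuousOn continuous_id.continuousOn,
      cfc_id' ℝ (star f * f)]
  -- f * e = f
  have hone : cfc (fun _ : ℝ => (1:ℝ)) (star f * f) = 1 := by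
    rw [cfc_const 1 (star f * f) hT, map_one]
  have h1e : (1 : A) - e = cfc (fun t => 1 - h t * t) (star f * f) := by
    rw [cfc_sub (fun _ => (1:ℝ)) (fun t => h t * t) (star f * f)
      continuous_const.continuousOn (hcont.mul continuous_id).continuousOn, hone, he]
  have hmTm : ((1:A) - e) * (star f * f) * ((1:A) - e) = 0 := by
    have e1 : cfc (fun t => (1 - h t * t) * t) (star f * f)
        = ((1:A) - e) * (star f * f) := by
      rw [cfc_mul (fun t => 1 - h t * t) (fun t => t) (star f * f)
        (continuous_const.sub (hcont.mul continuous_id)).continuousOn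
        continuous_id.continuousOn, cfc_id' ℝ (star f * f), ← h1e]
    have e2 : cfc (fun t => (1 - h t * t) * t * (1 - h t * t)) (star f * f)
        = ((1:A) - e) * (star f * f) * ((1:A) - e) := by
      rw [cfc_mul (fun t => (1 - h t * t) * t) (fun t => 1 - h t * t) (star f * f)
        ((continuous_const.sub (hcont.mul continuous_id)).mul continuous_id).continuousOn
        (continuous_const.sub (hcont.mul continuous_id)).continuousOn, e1, ← h1e]
    rw [← e2, ← cfc_zero ℝ (star f * f)]
    apply cfc_congr
    intro t ht
    rcases hgap t ht with rfl | hge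
    · simp
    · simp only [Pi.zero_apply, hh1 t hge]
      ring
  have hfm : f * ((1:A) - e) = 0 := by
    rw [← CStarRing.star_mul_self_eq_zero_iff]
    have hsae : star ((1:A) - e) = (1:A) - e := ((IsSelfAdjoint.one A).sub hesa).star_eq
    have : star (f * ((1:A) - e)) * (f * ((1:A) - e))
        = ((1:A) - e) * (star f * f) * ((1:A) - e) := by
      rw [star_mul, hsae]
      simp only [mul_assoc]
    rw [this, hmTm]
  have hfe : f * e = f := by
    have := hfm
    rw [mul_sub, mul_one, sub_eq_zero] at this
    exact this.symm
  refine ⟨k * star f, ?_, ?_, ?_⟩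
  · -- IsSelfAdjoint (f * (k * star f))
    rw [isSelfAdjoint_iff]
    simp only [star_mul, star_star, hksa.star_eq, mul_assoc]
  · -- IsSelfAdjoint ((k * star f) * f)
    rw [isSelfAdjoint_iff, mul_assoc, hkT]
    exact hesa.star_eq
  · -- (f * (k * star f)) * f = f
    calc (f * (k * star f)) * f = f * (k * (star f * f)) := by
          simp only [mul_assoc]
      _ = f * e := by rw [hkT]
      _ = f := hfe
section KLhelpers


lemma KL.isOrthoProj_Lmul (u : A) (hu : IsSelfAdjoint u) (hu2 : u * u = u) :
    IsOrthogonalProjectionOp (Lmul ((1:A) - u)) := by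
  constructor
  · ext x
    simp only [ContinuousLinearMap.mul_apply, Lmul_apply]
    rw [← mul_assoc]
    congr 1
    rw [sub_mul, one_mul, mul_sub, mul_one, hu2, sub_self, sub_zero]
  · intro x y
    have hsa : star ((1:A) - u) = (1:A) - u := ((IsSelfAdjoint.one A).sub hu).star_eq
    simp only [Lmul_apply, star_mul, hsa, mul_assoc]

end KLhelpers

theorem closed_image_iff_invertibleUpTo' {A : Type*} [CStarAlgebra A] (F : A →L[Aᵐᵒᵖ] A) :
    (IsClosed (Set.range ⇑F) ↔
      ∃ P Q : A →L[Aᵐᵒᵖ] A, IsOrthogonalProjectionOp P ∧ IsOrthogonalProjectionOp Q ∧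
        (1 - Q) * F * (1 - P) = F ∧ OpInvertibleUpTo F P Q) ∧
    (∀ P Q : A →L[Aᵐᵒᵖ] A, IsOrthogonalProjectionOp P → IsOrthogonalProjectionOp Q →
      (1 - Q) * F * (1 - P) = F → OpInvertibleUpTo F P Q →
        Set.range ⇑P = {x : A | F x = 0} ∧
        Set.range ⇑Q = OrthoComplement (Set.range ⇑F)) := by
  have hFx : ∀ x, F x = F 1 * x := F_eq_mul F
  constructor
  · constructor
    · -- closed range implies existence of the projections
      intro hF
      obtain ⟨C, hCpos, hC⟩ := bound_of_closed F hF
      set f := F 1 with hf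
      have hC' : ∀ y ∈ Set.range (fun x => f * x), ∃ x : A, f * x = y ∧ ‖x‖ ≤ C * ‖y‖ := by
        intro y hy
        apply hC
        obtain ⟨x, hx⟩ := hy
        exact ⟨x, by rw [hFx x]; exact hx⟩
      have hgap := gap_of_bound f C hCpos hC'
      obtain ⟨g, hsfg, hsgf, hfgf⟩ :=
        exists_g_of_gap f (2 / (3 * C ^ 2)) (by positivity) hgap
      have hfgf' : f * (g * f) = f := by rw [← mul_assoc, hfgf]
      have hfg2 : (f * g) * (f * g) = f * g := by rw [← mul_assoc, hfgf]
      have hgf2 : (g * f) * (g * f) = g * f := by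
        simp only [mul_assoc]
        rw [← mul_assoc f g f, hfgf]
      have hsub : ∀ (u z : A), z - (1 - u) * z = u * z := fun u z => by
        rw [sub_mul, one_mul, sub_sub_cancel]
      refine ⟨Lmul (1 - g * f), Lmul (1 - f * g),
        KL.isOrthoProj_Lmul (g * f) hsgf hgf2,
        KL.isOrthoProj_Lmul (f * g) hsfg hfg2, ?_, ?_⟩
      · -- (1 - Q) * F * (1 - P) = F
        ext x
        simp only [ContinuousLinearMap.mul_apply, ContinuousLinearMap.sub_apply,
          ContinuousLinearMap.one_apply, Lmul_apply]
        rw [hsub, hsub, hFx ((g * f) * x), hFx x]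
        calc (f * g) * (f * ((g * f) * x)) = (((f * g) * f) * (g * f)) * x := by
              simp only [mul_assoc]
          _ = (f * (g * f)) * x := by rw [hfgf]
          _ = f * x := by rw [hfgf']
      · -- invertibility up to (P, Q)
        refine ⟨Lmul g, ?_, ?_⟩
        · ext x
          simp only [ContinuousLinearMap.mul_apply, ContinuousLinearMap.sub_apply,
            ContinuousLinearMap.one_apply, Lmul_apply]
          rw [hsub, hsub, hFx ((g * f) * (g * x)), hsub]
          calc (f * g) * (f * ((g * f) * (g * x)))
              = ((((f * g) * f) * (g * f)) * g) * x := by simp only [mul_assoc]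
            _ = ((f * (g * f)) * g) * x := by rw [hfgf]
            _ = (f * g) * x := by rw [hfgf']
        · ext x
          simp only [ContinuousLinearMap.mul_apply, ContinuousLinearMap.sub_apply,
            ContinuousLinearMap.one_apply, Lmul_apply]
          rw [hsub, hsub, hFx ((g * f) * x)]
          calc g * ((f * g) * (f * ((g * f) * x)))
              = ((g * (((f * g) * f) * (g * f)))) * x := by simp only [mul_assoc]
            _ = (g * (f * (g * f))) * x := by rw [hfgf]
            _ = (g * f) * x := by rw [hfgf']
    · -- existence of the projections implies closed range
      rintro ⟨P, Q, hP, hQ, hmain, D, hD1, hD2⟩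
      rw [hmain] at hD1
      have hQ1 : Q * (1 - Q) = 0 := by rw [mul_sub, mul_one, hQ.1, sub_self]
      have hQF : Q * F = 0 := by
        rw [← hmain, ← mul_assoc, ← mul_assoc, hQ1, zero_mul, zero_mul]
      have hrange : Set.range ⇑F = ⇑Q ⁻¹' {0} := by
        ext x
        simp only [Set.mem_range, Set.mem_preimage, Set.mem_singleton_iff]
        constructor
        · rintro ⟨y, rfl⟩
          have h : Q (F y) = (Q * F) y := rfl
          rw [h, hQF, ContinuousLinearMap.zero_apply]
        · intro hx
          refine ⟨D x, ?_⟩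
          have h : F (D x) = (F * D) x := rfl
          rw [h, hD1, ContinuousLinearMap.sub_apply, ContinuousLinearMap.one_apply, hx,
            sub_zero]
      rw [hrange]
      exact isClosed_singleton.preimage Q.continuous
  · -- necessity of the ranges of P and Q
    intro P Q hP hQ hmain hinv
    obtain ⟨D, hD1, hD2⟩ := hinv
    rw [hmain] at hD1 hD2
    have hP1 : (1 - P) * P = 0 := by rw [sub_mul, one_mul, hP.1, sub_self]
    have hQ1 : Q * (1 - Q) = 0 := by rw [mul_sub, mul_one, hQ.1, sub_self]
    have hFP : F * P = 0 := by
      rw [← hmain, mul_assoc ((1 - Q) * F) (1 - P) P, hP1, mul_zero]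
    have hQF : Q * F = 0 := by
      rw [← hmain, ← mul_assoc, ← mul_assoc, hQ1, zero_mul, zero_mul]
    constructor
    · ext x
      simp only [Set.mem_range, Set.mem_setOf_eq]
      constructor
      · rintro ⟨y, rfl⟩
        have h : F (P y) = (F * P) y := rfl
        rw [h, hFP, ContinuousLinearMap.zero_apply]
      · intro hx
        refine ⟨x, ?_⟩
        have h1 : (D * F) x = (1 - P) x := by rw [hD2]
        simp only [ContinuousLinearMap.mul_apply, ContinuousLinearMap.sub_apply,
          ContinuousLinearMap.one_apply, hx, map_zero] at h1
        exact (sub_eq_zero.mp h1.symm).symm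
    · ext x
      constructor
      · rintro ⟨y, rfl⟩
        intro n hn
        obtain ⟨z, rfl⟩ := hn
        rw [← hQ.2 (F z) y]
        have hz : Q (F z) = 0 := by
          have h : Q (F z) = (Q * F) z := rfl
          rw [h, hQF, ContinuousLinearMap.zero_apply]
        rw [hz, star_zero, zero_mul]
      · intro hx
        refine ⟨x, ?_⟩
        have hw : F (D x) = x - Q x := by
          have h : F (D x) = (F * D) x := rfl
          rw [h, hD1, ContinuousLinearMap.sub_apply, ContinuousLinearMap.one_apply]
        have h1 : star (F (D x)) * x = 0 := hx (F (D x)) ⟨D x, rfl⟩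
        have h2 : star (F (D x)) * Q x = 0 := by
          rw [← hQ.2 (F (D x)) x]
          have hz : Q (F (D x)) = 0 := by
            have h : Q (F (D x)) = (Q * F) (D x) := rfl
            rw [h, hQF, ContinuousLinearMap.zero_apply]
          rw [hz, star_zero, zero_mul]
        have h3 : star (F (D x)) * (x - Q x) = 0 := by
          rw [mul_sub, h1, h2, sub_zero]
        rw [hw] at h3
        have h5 : x - Q x = 0 := (CStarRing.star_mul_self_eq_zero_iff _).mp h3
        exact (sub_eq_zero.mp h5).symm

/-- Lemma `related`: `F ∈ B(A)` has closed image iff there are orthogonal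
projections `P, Q ∈ B(A)` with `(I-Q)F(I-P) = F` and `F` invertible up to
`(P,Q)`; in that case necessarily `Im P = ker F` and `Im Q = (Im F)^⊥`. -/
theorem closed_image_iff_invertibleUpTo (F : A →L[Aᵐᵒᵖ] A) :
    (IsClosed (Set.range ⇑F) ↔
      ∃ P Q : A →L[Aᵐᵒᵖ] A, IsOrthogonalProjectionOp P ∧ IsOrthogonalProjectionOp Q ∧
        (1 - Q) * F * (1 - P) = F ∧ OpInvertibleUpTo F P Q) ∧
    (∀ P Q : A →L[Aᵐᵒᵖ] A, IsOrthogonalProjectionOp P → IsOrthogonalProjectionOp Q →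
      (1 - Q) * F * (1 - P) = F → OpInvertibleUpTo F P Q →
        Set.range ⇑P = {x : A | F x = 0} ∧
        Set.range ⇑Q = OrthoComplement (Set.range ⇑F)) :=
  closed_image_iff_invertibleUpTo' F
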